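/- Replaceability for the PSub(k,p) upper bounds: let p ∈ {k+1,…,n} and let v : {1,…,k} → {1,…,n} be an arbitrary assignment of target outcome values. Then: (i) P(⋂_{j=1}^{k} {Y_j = v(j)} ∩ {X = p}) ≤ P(X = p); and (ii) for every j ∈ {1,…,k}, P(⋂_{j=1}^{k} {Y_j = v(j)} ∩ {X = p}) ≤ P(Y_j = v(j)) − P(X = j, Y = v(j)). -/
import Mathlib


open MeasureTheory

theorem psub_kp_upper_bounds_replaceability
    {Ω : Type*} [MeasurableSpace Ω] (P : Measure Ω) [IsProbabilityMeasure P]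
    (n k : ℕ) (hk1 : 1 ≤ k) (hkn : k ≤ n)
    (X : Ω → ℕ) (Y : ℕ → Ω → ℕ) (Yobs : Ω → ℕ)
    (hX : Measurable X) (hY : ∀ j, Measurable (Y j))
    (hXr : ∀ ω, X ω ∈ Finset.Icc 1 n)
    (hYr : ∀ j ω, Y j ω ∈ Finset.Icc 1 n)
    (hcons : ∀ ω, Yobs ω = Y (X ω) ω)
    (p : ℕ) (hp : p ∈ Finset.Icc (k+1) n)
    (v : ℕ → ℕ) (hv : ∀ j ∈ Finset.Icc 1 k, v j ∈ Finset.Icc 1 n) :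
    (P ((⋂ j ∈ Finset.Icc 1 k, {ω | Y j ω = v j}) ∩ {ω | X ω = p})).toReal ≤ (P {ω | X ω = p}).toReal ∧
    ∀ j ∈ Finset.Icc 1 k, (P ((⋂ j ∈ Finset.Icc 1 k, {ω | Y j ω = v j}) ∩ {ω | X ω = p})).toReal ≤ (P {ω | Y j ω = v j}).toReal - (P {ω | X ω = j ∧ Yobs ω = v j}).toReal := by
  set A : Set Ω := (⋂ j ∈ Finset.Icc 1 k, {ω | Y j ω = v j}) ∩ {ω | X ω = p} with hA
  constructor
  · exact ENNReal.toReal_mono (measure_ne_top P _)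
      (measure_mono (Set.inter_subset_right))
  · intro j hj
    simp only [Finset.mem_Icc] at hj hp
    set B : Set Ω := {ω | X ω = j ∧ Yobs ω = v j} with hB
    have hBeq : B = {ω | X ω = j} ∩ {ω | Y j ω = v j} := by
      ext ω
      simp only [hB, Set.mem_setOf_eq, Set.mem_inter_iff]
      constructor
      · rintro ⟨h1, h2⟩; exact ⟨h1, by rw [hcons, h1] at h2; exact h2⟩
      · rintro ⟨h1, h2⟩; exact ⟨h1, by rw [hcons, h1]; exact h2⟩
    have hBm : MeasurableSet B := by
      rw [hBeq]
      exact (hX (measurableSet_singleton j)).inter ((hY j) (measurableSet_singleton _))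
    have hAsub : A ⊆ {ω | Y j ω = v j} := by
      intro ω hω
      have := hω.1
      rw [Set.mem_iInter₂] at this
      exact this j (Finset.mem_Icc.mpr hj)
    have hBsub : B ⊆ {ω | Y j ω = v j} := by
      rw [hBeq]; exact Set.inter_subset_right
    have hdisj : Disjoint A B := by
      rw [Set.disjoint_left]
      intro ω hωA hωB
      have h1 : X ω = p := hωA.2
      have h2 : X ω = j := hωB.1
      omega
    have hsum : P A + P B ≤ P {ω | Y j ω = v j} := by
      rw [← measure_union hdisj hBm]
      exact measure_mono (Set.union_subset hAsub hBsub)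
    have h1 : (P A + P B).toReal ≤ (P {ω | Y j ω = v j}).toReal :=
      ENNReal.toReal_mono (measure_ne_top P _) hsum
    rw [ENNReal.toReal_add (measure_ne_top P _) (measure_ne_top P _)] at h1
    linarith
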